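/- Let X be a non-discrete locally compact Hausdorff space and V a non-trivial (nonzero) metrizable topological vector space over ℝ. If X is σ-compact and non-compact, or more generally if X is not pseudocompact, then the colimit space topology on C_cpt(X, V) = ⋃_{K compact} C_K(X, V) (the finest topology making each inclusion C_K(X, V) → C_cpt(X, V) continuous, where C_K(X, V) is the group of continuous maps X → V with support in K, with the topology of uniform convergence) is not a group topology; that is, the family {C_K(X, V)}_{K compact} does not satisfy ACP. -/

import Mathlib

open TopologicalSpace
open Filter Set Topology Uniformity
set_option linter.unusedSectionVars false
set_option maxHeartbeats 1000000

variable (X : Type*) [TopologicalSpace X] [T2Space X] [LocallyCompactSpace X]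
variable (V : Type*) [AddCommGroup V] [Module ℝ V] [TopologicalSpace V]
  [IsTopologicalAddGroup V] [ContinuousSMul ℝ V]

/-- The group (under pointwise addition) of continuous compactly supported `V`-valued maps on
`X`; the support of `f` is the closure of `{x | f x ≠ 0}`. -/
def CcptAdd : AddSubgroup (X → V) where
  carrier := {f | Continuous f ∧ IsCompact (closure {x | f x ≠ 0})}
  zero_mem' := by
    refine ⟨continuous_const, ?_⟩
    have : {x : X | (0 : X → V) x ≠ 0} = ∅ := by ext x; simp
    rw [this, closure_empty]
    exact isCompact_empty
  add_mem' := by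
    rintro f g ⟨hfc, hfk⟩ ⟨hgc, hgk⟩
    refine ⟨hfc.add hgc, ?_⟩
    refine (hfk.union hgk).of_isClosed_subset isClosed_closure ?_
    rw [← closure_union]
    refine closure_mono fun x hx => ?_
    by_contra hc
    simp only [Set.mem_union, Set.mem_setOf_eq, not_or, not_not] at hc
    exact hx (by simp [Pi.add_apply, hc.1, hc.2])
  neg_mem' := by
    rintro f ⟨hfc, hfk⟩
    refine ⟨hfc.neg, ?_⟩
    have : {x : X | (-f) x ≠ 0} = {x | f x ≠ 0} := by
      ext x; simp [Pi.neg_apply, neg_eq_zero]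
    rw [this]
    exact hfk

/-- The subgroup `C_K(X, V)` of continuous maps with support contained in `K`, as a subset. -/
def CKset (K : Set X) : Set (X → V) := {f | Continuous f ∧ closure {x | f x ≠ 0} ⊆ K}

theorem CKset_subset_Ccpt (K : Set X) (hK : IsCompact K) :
    CKset X V K ⊆ (CcptAdd X V : Set (X → V)) := fun f hf =>
  ⟨hf.1, hK.of_isClosed_subset isClosed_closure hf.2⟩

/-- The topology of uniform convergence on `C_K(X, V)` (with respect to the canonical uniform
structure of the topological vector space `V`). -/
noncomputable def tCK (K : Set X) : TopologicalSpace (CKset X V K) :=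
  letI : UniformSpace V := IsTopologicalAddGroup.rightUniformSpace V
  TopologicalSpace.induced (fun f => UniformFun.ofFun (f : X → V))
    (UniformFun.topologicalSpace X V)

/-- The colimit space topology on `C_cpt(X, V) = ⋃_K C_K(X, V)`: the finest topology making
each inclusion `C_K(X, V) → C_cpt(X, V)` continuous. -/
noncomputable def TccptColim : TopologicalSpace (CcptAdd X V) :=
  ⨆ (K : Set X) (hK : IsCompact K),
    TopologicalSpace.coinduced (Set.inclusion (CKset_subset_Ccpt X V K hK)) (tCK X V K)

section AuxACP

noncomputable def dsup (d : V → V → ℝ) (S : Set X) (f : X → V) : ℝ :=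
  sSup (insert (0:ℝ) ((fun x => d (f x) 0) '' S))

/-- The "bad" sets: `f` is `(i,k)`-blocked if the main pocket `OO i 0` is loud at scale
`4·2⁻ⁱ`, the sub-pocket `OO i (k+1)` is loud at scale `2⁻ⁱ/2`, all other sub-pockets are
quiet (below `2⁻ⁱ/8`), and `f` has a value of size at least `2⁻ᵏ` on the far set `R i`. -/
def IsBlocked (d : V → V → ℝ) (OO : ℕ → ℕ → Set X) (R : ℕ → Set X) (i k : ℕ)
    (f : X → V) : Prop :=
  4 * (2:ℝ)⁻¹ ^ i ≤ dsup X V d (OO i 0) f ∧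
  (2:ℝ)⁻¹ ^ i / 2 ≤ dsup X V d (OO i (k + 1)) f ∧
  dsup X V d (⋃ k' ∈ {m : ℕ | m ≠ k}, OO i (k' + 1)) f ≤ (2:ℝ)⁻¹ ^ i / 8 ∧
  (2:ℝ)⁻¹ ^ k ≤ dsup X V d (R i) f

variable {X V}


theorem dsup_le {d : V → V → ℝ} {S : Set X} {f : X → V} {c : ℝ} (h0 : 0 ≤ c)
    (h : ∀ x ∈ S, d (f x) 0 ≤ c) : dsup X V d S f ≤ c := by
  refine Real.sSup_le ?_ h0
  rintro y (rfl | ⟨z, hz, rfl⟩)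
  · exact h0
  · exact h z hz

theorem le_dsup {d : V → V → ℝ} {S : Set X} {f : X → V} {C : ℝ}
    (hC : ∀ x, d (f x) 0 ≤ C) {x : X} (hx : x ∈ S) : d (f x) 0 ≤ dsup X V d S f := by
  refine le_csSup ⟨max C 0, ?_⟩ (Set.mem_insert_of_mem _ ⟨x, hx, rfl⟩)
  rintro y (rfl | ⟨z, hz, rfl⟩)
  · exact le_max_right _ _
  · exact le_max_of_le_left (hC z)

theorem dsup_nonneg {d : V → V → ℝ} (hd0 : ∀ a b, 0 ≤ d a b) {S : Set X} {f : X → V} :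
    0 ≤ dsup X V d S f := by
  refine Real.sSup_nonneg ?_
  rintro y (rfl | ⟨z, hz, rfl⟩)
  · exact le_rfl
  · exact hd0 _ _

theorem dsup_le_add {d : V → V → ℝ} (hd0 : ∀ a b, 0 ≤ d a b)
    (htri : ∀ a b c, d a c ≤ d a b + d b c)
    {S : Set X} {f g : X → V} {ε C : ℝ} (hC : ∀ x, d (g x) 0 ≤ C) (hε : 0 ≤ ε)
    (hfg : ∀ x, d (f x) (g x) ≤ ε) : dsup X V d S f ≤ dsup X V d S g + ε := by
  refine dsup_le (add_nonneg (dsup_nonneg hd0) hε) fun x hx => ?_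
  calc d (f x) 0 ≤ d (f x) (g x) + d (g x) 0 := htri _ _ _
    _ ≤ ε + dsup X V d S g := add_le_add (hfg x) (le_dsup hC hx)
    _ = dsup X V d S g + ε := add_comm _ _

theorem dsup_mono_set {d : V → V → ℝ} (hd0 : ∀ a b, 0 ≤ d a b) {S S' : Set X} {f : X → V}
    {C : ℝ} (hC : ∀ x, d (f x) 0 ≤ C) (hSS : S ⊆ S') :
    dsup X V d S f ≤ dsup X V d S' f :=
  dsup_le (dsup_nonneg hd0) fun x hx => le_dsup hC (hSS hx)

theorem dsup_vanish_le {d : V → V → ℝ} (hrefl : ∀ a, d a a = 0) {S : Set X} {f : X → V}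
    {c : ℝ} (h0 : 0 ≤ c) (h : ∀ x ∈ S, f x = 0) : dsup X V d S f ≤ c := by
  refine dsup_le h0 fun x hx => ?_
  rw [h x hx, hrefl]; exact h0

theorem blocked_open_aux (d : V → V → ℝ)
    (hd0 : ∀ a b, 0 ≤ d a b) (hsymm : ∀ a b, d a b = d b a)
    (htri : ∀ a b c, d a c ≤ d a b + d b c) (hrefl : ∀ a, d a a = 0)
    (OO : ℕ → ℕ → Set X) (R : ℕ → Set X)
    (K : Set X)
    (hfin : {i : ℕ | ∃ x ∈ R i, x ∈ K}.Finite)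
    (f : X → V) (hfb : ∃ C, ∀ x, d (f x) 0 ≤ C)
    (hfU : ∀ i k, ¬ IsBlocked X V d OO R i k f) :
    ∃ ε > 0, ∀ g : X → V, (∃ C, ∀ x, d (g x) 0 ≤ C) → closure {x | g x ≠ 0} ⊆ K →
      (∀ x, d (f x) (g x) < ε) → ∀ i k, ¬ IsBlocked X V d OO R i k g := by
  classical
  obtain ⟨Cf, hCf⟩ := hfb
  -- per-index candidate radii for the active indices
  have key : ∀ i : ℕ, ∃ εi : ℝ, 0 < εi ∧ ∀ g : X → V, (∃ C, ∀ x, d (g x) 0 ≤ C) →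
      (∀ x, d (f x) (g x) ≤ εi) → ∀ k, ¬ IsBlocked X V d OO R i k g := by
    intro i
    set β : ℝ := (2:ℝ)⁻¹ ^ i with hβdef
    have hβpos : 0 < β := pow_pos (by norm_num) i
    -- transfer inequalities
    have transfer_up : ∀ (S : Set X) (g : X → V) (ε : ℝ), (∃ C, ∀ x, d (g x) 0 ≤ C) →
        0 ≤ ε → (∀ x, d (f x) (g x) ≤ ε) → dsup X V d S g ≤ dsup X V d S f + ε := by
      intro S g ε hgb hε hfg
      obtain ⟨C, hC⟩ := hgb
      exact dsup_le_add hd0 htri hCf hε (fun x => by rw [hsymm]; exact hfg x)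
    have transfer_down : ∀ (S : Set X) (g : X → V) (ε : ℝ), (∃ C, ∀ x, d (g x) 0 ≤ C) →
        0 ≤ ε → (∀ x, d (f x) (g x) ≤ ε) → dsup X V d S f ≤ dsup X V d S g + ε := by
      intro S g ε hgb hε hfg
      obtain ⟨C, hC⟩ := hgb
      exact dsup_le_add hd0 htri hC hε hfg
    by_cases hM : dsup X V d (OO i 0) f < 4 * β
    · -- main pocket of f is quiet: kill all k via the first condition
      refine ⟨(4 * β - dsup X V d (OO i 0) f) / 2, by linarith, ?_⟩
      intro g hgb hfg k hB
      have h1 := transfer_up (OO i 0) g _ hgb (by linarith) hfg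
      have h2 := hB.1
      linarith
    · push_neg at hM
      by_cases hκ0 : ∀ k : ℕ, dsup X V d (OO i (k + 1)) f ≤ β / 4
      · -- all sub-pockets quiet: kill all k via the second condition
        refine ⟨β / 8, by linarith, ?_⟩
        intro g hgb hfg k hB
        have h1 := transfer_up (OO i (k + 1)) g _ hgb (by linarith) hfg
        have h2 := hB.2.1
        have h3 := hκ0 k
        linarith
      · push_neg at hκ0
        obtain ⟨k₀, hk₀⟩ := hκ0
        by_cases hκ1 : ∀ k : ℕ, k ≠ k₀ → dsup X V d (OO i (k + 1)) f ≤ β / 4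
        · -- exactly one loud sub-pocket k₀
          -- since f is not (i,k₀)-blocked and main pocket is loud, one of the
          -- remaining three conditions fails for f at k₀
          have hnb := hfU i k₀
          rw [IsBlocked] at hnb
          push_neg at hnb
          have hnb' := hnb hM
          by_cases hc2 : dsup X V d (OO i (k₀ + 1)) f < β / 2
          · refine ⟨min (β / 8) ((β / 2 - dsup X V d (OO i (k₀ + 1)) f) / 2),
              lt_min (by linarith) (by linarith), ?_⟩
            intro g hgb hfg k hB
            by_cases hkk : k = k₀
            · subst hkk
              have h1 := transfer_up (OO i (k + 1)) g _ hgb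
                (le_of_lt (lt_min (by linarith) (by linarith))) hfg
              have h2 := hB.2.1
              have h3 : min (β / 8) ((β / 2 - dsup X V d (OO i (k + 1)) f) / 2) ≤
                  (β / 2 - dsup X V d (OO i (k + 1)) f) / 2 := min_le_right _ _
              linarith
            · have h1 := transfer_up (OO i (k + 1)) g _ hgb
                (le_of_lt (lt_min (by linarith) (by linarith))) hfg
              have h2 := hB.2.1
              have h3 := hκ1 k hkk
              have h4 : min (β / 8) ((β / 2 - dsup X V d (OO i (k₀ + 1)) f) / 2) ≤ β / 8 :=
                min_le_left _ _
              linarith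
          · push_neg at hc2
            by_cases hc3' : dsup X V d (⋃ k' ∈ {m : ℕ | m ≠ k₀}, OO i (k' + 1)) f ≤ β / 8
            case neg =>
              -- the "others quiet" condition fails for f at k₀
              push_neg at hc3'
              have hc3 := hc3'
              refine ⟨min (β / 8) ((dsup X V d (⋃ k' ∈ {m : ℕ | m ≠ k₀}, OO i (k' + 1)) f
                  - β / 8) / 2), lt_min (by linarith) (by linarith), ?_⟩
              intro g hgb hfg k hB
              by_cases hkk : k = k₀
              · subst hkk
                have h1 := transfer_down (⋃ k' ∈ {m : ℕ | m ≠ k}, OO i (k' + 1)) g _ hgb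
                  (le_of_lt (lt_min (by linarith) (by linarith))) hfg
                have h2 := hB.2.2.1
                have h3 : min (β / 8) ((dsup X V d (⋃ k' ∈ {m : ℕ | m ≠ k}, OO i (k' + 1)) f
                    - β / 8) / 2) ≤ (dsup X V d (⋃ k' ∈ {m : ℕ | m ≠ k}, OO i (k' + 1)) f
                    - β / 8) / 2 := min_le_right _ _
                linarith
              · have h1 := transfer_up (OO i (k + 1)) g _ hgb
                  (le_of_lt (lt_min (by linarith) (by linarith))) hfg
                have h2 := hB.2.1
                have h3 := hκ1 k hkk
                have h4 : min (β / 8) ((dsup X V d (⋃ k' ∈ {m : ℕ | m ≠ k₀}, OO i (k' + 1)) f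
                    - β / 8) / 2) ≤ β / 8 := min_le_left _ _
                linarith
            case pos =>
              -- the far condition fails for f at k₀
              have hc4 : dsup X V d (R i) f < (2:ℝ)⁻¹ ^ k₀ := hnb' hc2 hc3'
              refine ⟨min (β / 8) (((2:ℝ)⁻¹ ^ k₀ - dsup X V d (R i) f) / 2),
                lt_min (by linarith) (by linarith), ?_⟩
              intro g hgb hfg k hB
              by_cases hkk : k = k₀
              · subst hkk
                have h1 := transfer_up (R i) g _ hgb
                  (le_of_lt (lt_min (by linarith) (by linarith))) hfg
                have h2 := hB.2.2.2
                have h3 : min (β / 8) (((2:ℝ)⁻¹ ^ k - dsup X V d (R i) f) / 2) ≤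
                    ((2:ℝ)⁻¹ ^ k - dsup X V d (R i) f) / 2 := min_le_right _ _
                linarith
              · have h1 := transfer_up (OO i (k + 1)) g _ hgb
                  (le_of_lt (lt_min (by linarith) (by linarith))) hfg
                have h2 := hB.2.1
                have h3 := hκ1 k hkk
                have h4 : min (β / 8) (((2:ℝ)⁻¹ ^ k₀ - dsup X V d (R i) f) / 2) ≤ β / 8 :=
                  min_le_left _ _
                linarith
        · -- at least two loud sub-pockets: the "others quiet" condition fails for every k
          push_neg at hκ1
          obtain ⟨k₁, hk₁ne, hk₁⟩ := hκ1
          refine ⟨β / 16, by linarith, ?_⟩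
          intro g hgb hfg k hB
          obtain ⟨C, hC⟩ := id hgb
          -- pick the loud pocket different from k
          obtain ⟨k', hk'ne, hk'⟩ : ∃ k', k' ≠ k ∧ β / 4 < dsup X V d (OO i (k' + 1)) f := by
            by_cases h : k = k₀
            · exact ⟨k₁, by rw [h]; exact hk₁ne, hk₁⟩
            · exact ⟨k₀, fun hc => h hc.symm, hk₀⟩
          have hsub : OO i (k' + 1) ⊆ ⋃ k'' ∈ {m : ℕ | m ≠ k}, OO i (k'' + 1) := by
            intro y hy
            exact Set.mem_biUnion hk'ne hy
          have h1 : dsup X V d (OO i (k' + 1)) g ≤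
              dsup X V d (⋃ k'' ∈ {m : ℕ | m ≠ k}, OO i (k'' + 1)) g :=
            dsup_mono_set hd0 hC hsub
          have h2 := transfer_down (OO i (k' + 1)) g (β/16) hgb (by linarith) hfg
          have h3 := hB.2.2.1
          linarith
  choose εf hεfpos hεfspec using key
  -- take the final ε as the minimum over the active indices
  set I : Finset ℕ := hfin.toFinset with hIdef
  set ε : ℝ := (insert (1:ℝ) (I.image εf)).min' ⟨1, Finset.mem_insert_self _ _⟩ with hεdef
  have hεpos : 0 < ε := by
    apply (Finset.lt_min'_iff _ _).mpr
    intro y hy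
    rcases Finset.mem_insert.mp hy with rfl | hy
    · norm_num
    · obtain ⟨i, _, rfl⟩ := Finset.mem_image.mp hy
      exact hεfpos i
  refine ⟨ε, hεpos, ?_⟩
  intro g hgb hgK hfg i k
  by_cases hact : ∃ x ∈ R i, x ∈ K
  · -- active index: use the chosen radius
    have hiI : i ∈ I := by rw [hIdef, Set.Finite.mem_toFinset]; exact hact
    have hle : ε ≤ εf i := by
      apply Finset.min'_le
      exact Finset.mem_insert_of_mem (Finset.mem_image_of_mem εf hiI)
    exact hεfspec i g hgb (fun x => le_of_lt (lt_of_lt_of_le (hfg x) hle)) k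
  · -- inactive index: g vanishes on R i
    push_neg at hact
    intro hB
    have hvan : ∀ x ∈ R i, g x = 0 := by
      intro x hx
      by_contra hne
      exact hact x hx (hgK (subset_closure hne))
    have h1 : dsup X V d (R i) g ≤ 0 := dsup_vanish_le hrefl le_rfl hvan
    have h2 := hB.2.2.2
    have h3 : (0:ℝ) < (2:ℝ)⁻¹ ^ k := pow_pos (by norm_num) k
    linarith

/-- A distance function on `V` compatible with the canonical group uniformity. -/
theorem exists_good_dist [MetrizableSpace V] : ∃ d : V → V → ℝ,
    (∀ a b, 0 ≤ d a b) ∧ (∀ a b, d a b = d b a) ∧ (∀ a b c, d a c ≤ d a b + d b c) ∧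
    (∀ a, d a a = 0) ∧
    (@uniformity V (IsTopologicalAddGroup.rightUniformSpace V)).HasBasis (fun ε : ℝ => 0 < ε)
      (fun ε => {p : V × V | d p.1 p.2 < ε}) ∧
    (∀ v : V, v ≠ 0 → 0 < d v 0) := by
  letI uV : UniformSpace V := IsTopologicalAddGroup.rightUniformSpace V
  haveI : (𝓤 V).IsCountablyGenerated := by
    have h : 𝓤 V = Filter.comap (fun p : V × V => p.2 + -p.1) (𝓝 0) := rfl
    rw [h]; infer_instance
  obtain ⟨I, hI⟩ := UniformSpace.metrizable_uniformity V
  refine ⟨fun a b => @dist V I.toDist a b, ?_, ?_, ?_, ?_, ?_, ?_⟩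
  · intro a b; exact @dist_nonneg V I a b
  · intro a b; exact @dist_comm V I a b
  · intro a b c; exact @dist_triangle V I a b c
  · intro a; exact @dist_self V I a
  · have := @Metric.uniformity_basis_dist V I
    rwa [hI] at this
  · intro v hv
    rcases lt_or_ge 0 (@dist V I.toDist v 0) with h | h
    · exact h
    have h0 : @dist V I.toDist v 0 = 0 := le_antisymm h (@dist_nonneg V I v 0)
    exfalso
    apply hv
    have hins : @Inseparable V I.toUniformSpace.toTopologicalSpace v 0 :=
      (@Metric.inseparable_iff V I v 0).mpr h0
    rw [hI] at hins
    exact hins.eq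

/-- Countably many pairwise disjoint nonempty open subsets of any open neighbourhood of a
non-isolated point. -/
theorem exists_pockets {p : X} (hp : ¬IsOpen ({p} : Set X)) {W₀ : Set X}
    (hW : IsOpen W₀) (hpW : p ∈ W₀) :
    ∃ O : ℕ → Set X, (∀ n, IsOpen (O n)) ∧ (∀ n, (O n).Nonempty) ∧ (∀ n, O n ⊆ W₀) ∧
      ∀ m n, m ≠ n → Disjoint (O m) (O n) := by
  have step : ∀ W : Set X, IsOpen W → p ∈ W →
      ∃ P : Set X × Set X, (IsOpen P.1 ∧ P.1.Nonempty ∧ P.1 ⊆ W ∧ Disjoint P.1 P.2) ∧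
        (IsOpen P.2 ∧ p ∈ P.2 ∧ P.2 ⊆ W) := by
    intro W hWo hpW
    have hy : ∃ y ∈ W, y ≠ p := by
      by_contra h
      push_neg at h
      have hWp : W = {p} := by
        apply subset_antisymm
        · intro y hy; exact h y hy
        · intro y hy; rw [Set.mem_singleton_iff] at hy; rw [hy]; exact hpW
      exact hp (hWp ▸ hWo)
    obtain ⟨y, hyW, hyp⟩ := hy
    obtain ⟨u, v, hu, hv, hyu, hpv, huv⟩ := t2_separation hyp
    refine ⟨(u ∩ W, v ∩ W), ⟨hu.inter hWo, ⟨y, hyu, hyW⟩, inter_subset_right,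
      huv.mono inter_subset_left inter_subset_left⟩, hv.inter hWo, ⟨hpv, hpW⟩,
      inter_subset_right⟩
  let T := {W : Set X // IsOpen W ∧ p ∈ W}
  have step' : ∀ W : T, ∃ P : Set X × Set X,
      (IsOpen P.1 ∧ P.1.Nonempty ∧ P.1 ⊆ W.1 ∧ Disjoint P.1 P.2) ∧
      (IsOpen P.2 ∧ p ∈ P.2 ∧ P.2 ⊆ W.1) := fun W => step W.1 W.2.1 W.2.2
  choose F hF using step'
  let nxt : T → T := fun W => ⟨(F W).2, (hF W).2.1, (hF W).2.2.1⟩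
  let chain : ℕ → T := fun n => nxt^[n] ⟨W₀, hW, hpW⟩
  have hchain_succ : ∀ n, chain (n + 1) = nxt (chain n) := by
    intro n; simp only [chain, Function.iterate_succ_apply']
  let O : ℕ → Set X := fun n => (F (chain n)).1
  have hOopen : ∀ n, IsOpen (O n) := fun n => (hF (chain n)).1.1
  have hOne : ∀ n, (O n).Nonempty := fun n => (hF (chain n)).1.2.1
  have hOsubchain : ∀ n, O n ⊆ (chain n).1 := fun n => (hF (chain n)).1.2.2.1
  have hchain_sub : ∀ n, (chain (n + 1)).1 ⊆ (chain n).1 := by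
    intro n; rw [hchain_succ n]; exact (hF (chain n)).2.2.2
  have hchain_mono : ∀ m n, m ≤ n → (chain n).1 ⊆ (chain m).1 := by
    intro m n h
    induction n with
    | zero => rw [Nat.le_zero] at h; rw [h]
    | succ k ih =>
      rcases Nat.lt_or_ge m (k+1) with h' | h'
      · exact (hchain_sub k).trans (ih (Nat.lt_succ_iff.mp h'))
      · have := le_antisymm h h'; rw [this]
  have hdisj : ∀ m n, m < n → Disjoint (O m) (O n) := by
    intro m n hmn
    have h1 : O n ⊆ (chain (m + 1)).1 := (hOsubchain n).trans (hchain_mono (m+1) n hmn)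
    have h2 : (chain (m+1)).1 = (F (chain m)).2 := by rw [hchain_succ m]
    have h3 : Disjoint (O m) ((F (chain m)).2) := (hF (chain m)).1.2.2.2
    exact h3.mono_right (h2 ▸ h1)
  refine ⟨O, hOopen, hOne, fun n => (hOsubchain n).trans ?_, fun m n hmn => ?_⟩
  · have : (chain n).1 ⊆ (chain 0).1 := hchain_mono 0 n (Nat.zero_le n)
    exact this
  · rcases lt_or_gt_of_ne hmn with h | h
    · exact hdisj m n h
    · exact (hdisj n m h).symm

/-- A sequence of compact sets with nonempty interior, disjoint from `Q`, escaping every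
compact set. -/
theorem exists_far_family (Q : Set X) (hQ : IsCompact Q)
    (hX : (SigmaCompactSpace X ∧ ¬CompactSpace X) ∨
      ∃ h : X → ℝ, Continuous h ∧ ¬∃ B : ℝ, ∀ x, |h x| ≤ B) :
    ∃ R : ℕ → Set X, (∀ i, IsCompact (R i)) ∧ (∀ i, (interior (R i)).Nonempty) ∧
      (∀ i, ∀ x ∈ R i, x ∉ Q) ∧ ∀ K : Set X, IsCompact K → {i : ℕ | ∃ x ∈ R i, x ∈ K}.Finite := by
  rcases hX with ⟨hσ, hnc⟩ | ⟨h, hc, hub⟩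
  · -- σ-compact non-compact case
    haveI := hσ
    let E := CompactExhaustion.choice X
    have hne : ∀ i : ℕ, ∃ x, x ∉ E i ∪ Q := by
      intro i
      by_contra hcon
      push_neg at hcon
      apply hnc
      rw [← isCompact_univ_iff]
      have : (univ : Set X) = E i ∪ Q := subset_antisymm (fun x _ => hcon x) (subset_univ _)
      rw [this]
      exact (E.isCompact i).union hQ
    have hGopen : ∀ i : ℕ, IsOpen ((E i ∪ Q)ᶜ) :=
      fun i => (((E.isCompact i).isClosed).union hQ.isClosed).isOpen_compl
    choose x hx using hne
    have hR : ∀ i : ℕ, ∃ R : Set X, IsCompact R ∧ x i ∈ interior R ∧ R ⊆ (E i ∪ Q)ᶜ :=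
      fun i => exists_compact_subset (hGopen i) (hx i)
    choose R hRc hRint hRsub using hR
    refine ⟨R, hRc, fun i => ⟨x i, hRint i⟩, fun i y hy hyQ => hRsub i hy (Or.inr hyQ), ?_⟩
    intro K hK
    obtain ⟨m, hm⟩ := E.exists_superset_of_isCompact hK
    apply Set.Finite.subset (Set.finite_Iio m)
    rintro i ⟨y, hyR, hyK⟩
    by_contra hi
    rw [Set.mem_Iio, not_lt] at hi
    exact hRsub i hyR (Or.inl (E.subset hi (hm hyK)))
  · -- not pseudocompact case
    obtain ⟨C₀, hC₀⟩ : ∃ C₀ : ℝ, ∀ y ∈ Q, |h y| ≤ C₀ := by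
      rcases Q.eq_empty_or_nonempty with hQe | hQn
      · exact ⟨0, by rw [hQe]; simp⟩
      · obtain ⟨y₀, hy₀, hmax⟩ :=
          hQ.exists_isMaxOn hQn ((continuous_abs.comp hc).continuousOn)
        exact ⟨|h y₀|, hmax⟩
    set M₀ : ℝ := max C₀ 0 with hM₀
    have hub' : ∀ B : ℝ, ∃ x, B < |h x| := by
      intro B
      by_contra hcon
      push_neg at hcon
      exact hub ⟨B, hcon⟩
    have hx : ∀ i : ℕ, ∃ x, M₀ + i < |h x| := fun i => hub' (M₀ + i)
    choose x hxi using hx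
    have hGopen : ∀ i : ℕ, IsOpen {y : X | M₀ + i < |h y|} :=
      fun i => isOpen_lt continuous_const (continuous_abs.comp hc)
    have hR : ∀ i : ℕ, ∃ R : Set X, IsCompact R ∧ x i ∈ interior R ∧
        R ⊆ {y : X | M₀ + i < |h y|} :=
      fun i => exists_compact_subset (hGopen i) (hxi i)
    choose R hRc hRint hRsub using hR
    refine ⟨R, hRc, fun i => ⟨x i, hRint i⟩, ?_, ?_⟩
    · intro i y hy hyQ
      have h1 : M₀ + i < |h y| := hRsub i hy
      have h2 : |h y| ≤ M₀ := le_trans (hC₀ y hyQ) (le_max_left _ _)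
      have : (0:ℝ) ≤ i := Nat.cast_nonneg i
      linarith
    · intro K hK
      obtain ⟨CK, hCK⟩ : ∃ CK : ℝ, ∀ y ∈ K, |h y| ≤ CK := by
        rcases K.eq_empty_or_nonempty with hKe | hKn
        · exact ⟨0, by rw [hKe]; simp⟩
        · obtain ⟨y₀, hy₀, hmax⟩ :=
            hK.exists_isMaxOn hKn ((continuous_abs.comp hc).continuousOn)
          exact ⟨|h y₀|, hmax⟩
      obtain ⟨m, hm⟩ := exists_nat_ge (CK - M₀)
      apply Set.Finite.subset (Set.finite_Iio m)
      rintro i ⟨y, hyR, hyK⟩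
      rw [Set.mem_Iio]
      by_contra hi
      push_neg at hi
      have h1 : M₀ + i < |h y| := hRsub i hyR
      have h2 : |h y| ≤ CK := hCK y hyK
      have h3 : CK - M₀ ≤ m := hm
      have h4 : (m : ℝ) ≤ i := Nat.cast_le.mpr hi
      linarith

/-- Urysohn bump. -/
theorem exists_bump {x : X} {Uo : Set X} (hU : IsOpen Uo) (hx : x ∈ Uo) :
    ∃ φ : X → ℝ, Continuous φ ∧ φ x = 1 ∧ (∀ y, φ y ∈ Set.Icc (0:ℝ) 1) ∧
      ∀ y, y ∉ Uo → φ y = 0 := by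
  obtain ⟨f, hf1, hf0, _, hficc⟩ :=
    exists_continuous_one_zero_of_isCompact (isCompact_singleton (x := x))
      hU.isClosed_compl (disjoint_compl_right_iff_subset.mpr (Set.singleton_subset_iff.mpr hx))
  exact ⟨f, f.continuous, hf1 rfl, hficc, fun y hy => hf0 hy⟩

theorem incl_continuous (K : Set X) (hK : IsCompact K) :
    Continuous[tCK X V K, TccptColim X V] (Set.inclusion (CKset_subset_Ccpt X V K hK)) := by
  rw [continuous_iff_coinduced_le]
  exact le_iSup₂ (f := fun (K : Set X) (hK : IsCompact K) =>
    TopologicalSpace.coinduced (Set.inclusion (CKset_subset_Ccpt X V K hK)) (tCK X V K)) K hK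

theorem tCK_isOpen_of_ball (K : Set X) (d : V → V → ℝ)
    (hbasis : (@uniformity V (IsTopologicalAddGroup.rightUniformSpace V)).HasBasis
      (fun ε : ℝ => 0 < ε) (fun ε => {p : V × V | d p.1 p.2 < ε}))
    (S : Set (CKset X V K))
    (h : ∀ f ∈ S, ∃ ε > 0, ∀ g : CKset X V K,
      (∀ x, d ((f : X → V) x) ((g : X → V) x) < ε) → g ∈ S) :
    IsOpen[tCK X V K] S := by
  letI uV : UniformSpace V := IsTopologicalAddGroup.rightUniformSpace V
  letI tK : TopologicalSpace (CKset X V K) := tCK X V K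
  rw [isOpen_iff_mem_nhds]
  intro f hf
  have hnh : 𝓝 f = comap (fun g : CKset X V K => UniformFun.ofFun (g : X → V))
      (𝓝 (UniformFun.ofFun (f : X → V))) :=
    nhds_induced (fun g : CKset X V K => UniformFun.ofFun (g : X → V)) f
  rw [hnh, mem_comap]
  obtain ⟨ε, hε, hball⟩ := h f hf
  refine ⟨{G : UniformFun X V | (UniformFun.ofFun (f : X → V), G) ∈
      UniformFun.gen X V {p : V × V | d p.1 p.2 < ε}}, ?_, ?_⟩
  · exact (UniformFun.hasBasis_nhds_of_basis X V (UniformFun.ofFun (f : X → V)) hbasis).mem_of_mem hε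
  · intro g hg
    exact hball g hg

theorem tCK_ball_of_mem_nhds (K : Set X) (d : V → V → ℝ)
    (hbasis : (@uniformity V (IsTopologicalAddGroup.rightUniformSpace V)).HasBasis
      (fun ε : ℝ => 0 < ε) (fun ε => {p : V × V | d p.1 p.2 < ε}))
    (f : CKset X V K) (N : Set (CKset X V K)) (hN : N ∈ @nhds _ (tCK X V K) f) :
    ∃ ε > 0, ∀ g : CKset X V K,
      (∀ x, d ((f : X → V) x) ((g : X → V) x) < ε) → g ∈ N := by
  letI uV : UniformSpace V := IsTopologicalAddGroup.rightUniformSpace V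
  letI tK : TopologicalSpace (CKset X V K) := tCK X V K
  have hnh : 𝓝 f = comap (fun g : CKset X V K => UniformFun.ofFun (g : X → V))
      (𝓝 (UniformFun.ofFun (f : X → V))) :=
    nhds_induced (fun g : CKset X V K => UniformFun.ofFun (g : X → V)) f
  rw [hnh, mem_comap] at hN
  obtain ⟨T, hT, hTN⟩ := hN
  obtain ⟨ε, hε, hsub⟩ :=
    ((UniformFun.hasBasis_nhds_of_basis X V (UniformFun.ofFun (f : X → V)) hbasis).mem_iff).mp hT
  refine ⟨ε, hε, fun g hg => hTN ?_⟩
  exact Set.mem_preimage.mpr (hsub hg)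

theorem zero_mem_CKset (K : Set X) : (0 : X → V) ∈ CKset X V K := by
  constructor
  · exact continuous_const
  · have h : {x : X | (0 : X → V) x ≠ 0} = ∅ := by ext x; simp
    rw [h, closure_empty]
    exact Set.empty_subset K

theorem d_ball_mem_nhds {d : V → V → ℝ}
    (hbasis : (@uniformity V (IsTopologicalAddGroup.rightUniformSpace V)).HasBasis
      (fun ε : ℝ => 0 < ε) (fun ε => {p : V × V | d p.1 p.2 < ε}))
    {ε : ℝ} (hε : 0 < ε) (v : V) : {u : V | d v u < ε} ∈ 𝓝 v := by
  letI uV : UniformSpace V := IsTopologicalAddGroup.rightUniformSpace V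
  have hE : {p : V × V | d p.1 p.2 < ε} ∈ 𝓤 V := hbasis.mem_of_mem hε
  exact UniformSpace.ball_mem_nhds v hE

theorem d_cont {d : V → V → ℝ} (hsymm : ∀ a b, d a b = d b a)
    (htri : ∀ a b c, d a c ≤ d a b + d b c)
    (hbasis : (@uniformity V (IsTopologicalAddGroup.rightUniformSpace V)).HasBasis
      (fun ε : ℝ => 0 < ε) (fun ε => {p : V × V | d p.1 p.2 < ε})) :
    Continuous fun v : V => d v 0 := by
  rw [continuous_iff_continuousAt]
  intro v
  rw [ContinuousAt, Metric.tendsto_nhds]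
  intro ε hε
  filter_upwards [d_ball_mem_nhds hbasis hε v] with u hu
  rw [Real.dist_eq, abs_sub_lt_iff]
  constructor
  · have h1 : d u 0 ≤ d u v + d v 0 := htri _ _ _
    have h2 : d u v = d v u := hsymm _ _
    linarith
  · have h1 : d v 0 ≤ d v u + d u 0 := htri _ _ _
    linarith

theorem exists_dbound {d : V → V → ℝ} (hrefl : ∀ a, d a a = 0)
    (hcontd : Continuous fun v : V => d v 0) {f : X → V}
    (hf : Continuous f) (hsupp : IsCompact (closure {x | f x ≠ 0})) :
    ∃ C, ∀ x, d (f x) 0 ≤ C := by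
  rcases (closure {x : X | f x ≠ 0}).eq_empty_or_nonempty with he | hne
  · refine ⟨0, fun x => ?_⟩
    have hx : f x = 0 := by
      by_contra h
      have : x ∈ closure {x : X | f x ≠ 0} := subset_closure h
      rw [he] at this
      exact this
    rw [hx, hrefl]
  · obtain ⟨x₀, _, hmax⟩ := hsupp.exists_isMaxOn hne ((hcontd.comp hf).continuousOn)
    refine ⟨max (d (f x₀) 0) 0, fun x => ?_⟩
    by_cases hx : x ∈ closure {x : X | f x ≠ 0}
    · exact le_max_of_le_left (hmax hx)
    · have h0 : f x = 0 := by
        by_contra h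
        exact hx (subset_closure h)
      rw [h0, hrefl]
      exact le_max_right _ _

theorem exists_small_smul {d : V → V → ℝ} (hsymm : ∀ a b, d a b = d b a)
    (hbasis : (@uniformity V (IsTopologicalAddGroup.rightUniformSpace V)).HasBasis
      (fun ε : ℝ => 0 < ε) (fun ε => {p : V × V | d p.1 p.2 < ε}))
    {v : V} (hv : v ≠ 0) {ε : ℝ} (hε : 0 < ε) :
    ∃ w : V, w ≠ 0 ∧ ∀ s : ℝ, s ∈ Set.Icc (0:ℝ) 1 → d (s • w) 0 < ε := by
  have hW : {u : V | d 0 u < ε} ∈ 𝓝 (0 : V) := d_ball_mem_nhds hbasis hε 0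
  have hcont : Tendsto (fun r : ℝ => r • v) (𝓝 0) (𝓝 (0 : V)) := by
    have h := (continuous_id.smul (continuous_const (y := v))).tendsto (0 : ℝ)
    have h' : Tendsto (fun r : ℝ => r • v) (𝓝 0) (𝓝 ((0:ℝ) • v)) := h
    rwa [zero_smul] at h'
  have hpre := hcont hW
  rw [mem_map, Metric.mem_nhds_iff] at hpre
  obtain ⟨δ, hδ, hball⟩ := hpre
  refine ⟨(δ / 2) • v, ?_, ?_⟩
  · intro h
    apply hv
    have h2 : (δ / 2)⁻¹ • ((δ / 2) • v) = v := by
      rw [smul_smul, inv_mul_cancel₀ (by positivity), one_smul]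
    rw [h, smul_zero] at h2
    exact h2.symm
  · intro s hs
    have h1 : s • ((δ / 2) • v) = (s * (δ / 2)) • v := smul_smul s _ v
    have h2 : s * (δ / 2) ∈ Metric.ball (0 : ℝ) δ := by
      rw [Metric.mem_ball, Real.dist_eq, sub_zero, abs_mul]
      have hs1 : |s| ≤ 1 := abs_le.mpr ⟨by linarith [hs.1], hs.2⟩
      have hd2 : |δ / 2| = δ / 2 := abs_of_pos (by positivity)
      nlinarith [abs_nonneg s, abs_nonneg (δ / 2)]
    have h3 := hball h2
    rw [h1, hsymm]
    exact h3

end AuxACP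

/-- Let `X` be a non-discrete locally compact Hausdorff space and `V` a
non-trivial metrizable topological vector space over `ℝ`. If `X` is σ-compact and non-compact,
or more generally if `X` is not pseudocompact (i.e. admits a continuous unbounded real-valued
function), then the colimit space topology on `C_cpt(X, V)` determined by the subgroups
`C_K(X, V)` (with the topology of uniform convergence) is not a group topology: the family
`{C_K(X, V)}_K` does not satisfy ACP. -/
theorem ccpt_not_ACP_of_not_pseudocompact
    [MetrizableSpace V] [Nontrivial V]
    (hnd : ¬DiscreteTopology X)
    (hX : (SigmaCompactSpace X ∧ ¬CompactSpace X) ∨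
      ∃ f : X → ℝ, Continuous f ∧ ¬∃ B : ℝ, ∀ x, |f x| ≤ B) :
    ¬@IsTopologicalAddGroup (CcptAdd X V) (TccptColim X V) _ := by
  intro hTG
  classical
  letI T : TopologicalSpace (CcptAdd X V) := TccptColim X V
  haveI hTG' : @IsTopologicalAddGroup (CcptAdd X V) T _ := hTG
  haveI hCA : @ContinuousAdd (CcptAdd X V) T _ := hTG'.toContinuousAdd
  -- a compatible distance function on V
  obtain ⟨d, hd0, hsymm, htri, hrefl, hbasis, hdpos⟩ := exists_good_dist (V := V)
  have hcontd : Continuous fun v : V => d v 0 := d_cont hsymm htri hbasis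
  -- a non-isolated point with a compact neighbourhood
  obtain ⟨p, hp⟩ : ∃ p : X, ¬IsOpen ({p} : Set X) := by
    by_contra h
    push_neg at h
    exact hnd (discreteTopology_iff_isOpen_singleton.mpr h)
  obtain ⟨Q, hQc, hQmem⟩ := exists_compact_mem_nhds p
  have hpint : p ∈ interior Q := mem_interior_iff_mem_nhds.mpr hQmem
  -- pockets inside the interior of Q, doubly indexed
  obtain ⟨O, hOopen, hOne, hOsub, hOdisj⟩ := exists_pockets hp isOpen_interior hpint
  set OO : ℕ → ℕ → Set X := fun i k => O (Nat.pair i k) with hOOdef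
  have hOOopen : ∀ i k, IsOpen (OO i k) := fun i k => hOopen _
  have hOOne : ∀ i k, (OO i k).Nonempty := fun i k => hOne _
  have hOOsub : ∀ i k, OO i k ⊆ interior Q := fun i k => hOsub _
  have hOOd : ∀ i k k', k ≠ k' → Disjoint (OO i k) (OO i k') := by
    intro i k k' hkk
    refine hOdisj _ _ fun hc => hkk ?_
    exact (Nat.pair_eq_pair.mp hc).2
  -- far compact sets escaping every compact set
  obtain ⟨R, hRc, hRint, hRQ, hRfin⟩ := exists_far_family Q hQc hX
  choose xs hxs using hRint
  -- boundedness of distances for compactly supported functions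
  have hboundC : ∀ F : CcptAdd X V, ∃ C, ∀ x, d ((F : X → V) x) 0 ≤ C := by
    intro F
    have hF : Continuous (F : X → V) ∧ IsCompact (closure {x | (F : X → V) x ≠ 0}) := F.2
    exact exists_dbound hrefl hcontd hF.1 hF.2
  have hboundK : ∀ (K : Set X) (hK : IsCompact K) (f : CKset X V K),
      ∃ C, ∀ x, d ((f : X → V) x) 0 ≤ C := by
    intro K hK f
    have hf : Continuous (f : X → V) ∧ closure {x | (f : X → V) x ≠ 0} ⊆ K := f.2
    exact exists_dbound hrefl hcontd hf.1 (hK.of_isClosed_subset isClosed_closure hf.2)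
  -- the bad open set U
  set U : Set (CcptAdd X V) := {F | ∀ i k, ¬ IsBlocked X V d OO R i k (F : X → V)} with hUdef
  have hU0 : (0 : CcptAdd X V) ∈ U := by
    intro i k hB
    have h1 : dsup X V d (OO i 0) ((0 : CcptAdd X V) : X → V) ≤ 0 :=
      dsup_vanish_le hrefl le_rfl fun x _ => rfl
    have h2 := hB.1
    have h3 : (0:ℝ) < (2:ℝ)⁻¹ ^ i := pow_pos (by norm_num) i
    linarith
  have hUopen : IsOpen[TccptColim X V] U := by
    rw [show TccptColim X V = ⨆ (K : Set X) (hK : IsCompact K),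
      TopologicalSpace.coinduced (Set.inclusion (CKset_subset_Ccpt X V K hK)) (tCK X V K)
      from rfl, isOpen_iSup_iff]
    intro K
    rw [isOpen_iSup_iff]
    intro hK
    rw [isOpen_coinduced]
    apply tCK_isOpen_of_ball K d hbasis
    intro f hf
    have hf' : ∀ i k, ¬ IsBlocked X V d OO R i k (f : X → V) := hf
    obtain ⟨ε, hε, hspec⟩ := blocked_open_aux d hd0 hsymm htri hrefl OO R K (hRfin K hK)
      (f : X → V) (hboundK K hK f) hf'
    refine ⟨ε, hε, fun g hg => ?_⟩
    exact hspec (g : X → V) (hboundK K hK g) g.2.2 hg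
  -- a half-sized neighbourhood V'
  have hUnhds : U ∈ @nhds _ T (0 : CcptAdd X V) := hUopen.mem_nhds hU0
  obtain ⟨V', hV'mem, hhalf⟩ := exists_nhds_zero_half hUnhds
  -- the trace of V' on C_Q contains a uniform ball
  have htrace : ∀ (K : Set X) (hK : IsCompact K), ∃ ε > 0, ∀ g : CKset X V K,
      (∀ x, d 0 ((g : X → V) x) < ε) →
      Set.inclusion (CKset_subset_Ccpt X V K hK) g ∈ V' := by
    intro K hK
    set zK : CKset X V K := ⟨0, zero_mem_CKset K⟩ with hzK
    have hz0 : Set.inclusion (CKset_subset_Ccpt X V K hK) zK = (0 : CcptAdd X V) :=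
      Subtype.ext rfl
    have hcontK := incl_continuous (X := X) (V := V) K hK
    have hpre : (Set.inclusion (CKset_subset_Ccpt X V K hK) ⁻¹' V') ∈
        @nhds _ (tCK X V K) zK := by
      letI tK : TopologicalSpace (CKset X V K) := tCK X V K
      refine hcontK.continuousAt.preimage_mem_nhds ?_
      rw [hz0]
      exact hV'mem
    obtain ⟨ε, hε, hspec⟩ := tCK_ball_of_mem_nhds K d hbasis zK _ hpre
    exact ⟨ε, hε, fun g hg => hspec g hg⟩
  obtain ⟨εQ, hεQpos, hεQ⟩ := htrace Q hQc
  -- a small vector for the pockets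
  obtain ⟨v, hv⟩ := exists_ne (0 : V)
  obtain ⟨w, hw0, hwsmall⟩ := exists_small_smul hsymm hbasis hv hεQpos
  have hH : 0 < d w 0 := hdpos w hw0
  obtain ⟨i, hi⟩ : ∃ i : ℕ, (2:ℝ)⁻¹ ^ i < d w 0 / 4 :=
    exists_pow_lt_of_lt_one (by linarith) (by norm_num)
  -- the trace of V' on C_{R i}
  obtain ⟨εR, hεRpos, hεR⟩ := htrace (R i) (hRc i)
  obtain ⟨wb, hwb0, hwbsmall⟩ := exists_small_smul hsymm hbasis hv hεRpos
  have hHb : 0 < d wb 0 := hdpos wb hwb0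
  obtain ⟨k, hk⟩ : ∃ k : ℕ, (2:ℝ)⁻¹ ^ k < d wb 0 :=
    exists_pow_lt_of_lt_one hHb (by norm_num)
  -- bump functions
  obtain ⟨y₀, hy₀⟩ := hOOne i 0
  obtain ⟨y₁, hy₁⟩ := hOOne i (k + 1)
  obtain ⟨φ, hφc, hφ1, hφ01, hφ0⟩ := exists_bump (hOOopen i 0) hy₀
  obtain ⟨ψ, hψc, hψ1, hψ01, hψ0⟩ := exists_bump (hOOopen i (k + 1)) hy₁
  obtain ⟨χ, hχc, hχ1, hχ01, hχ0⟩ := exists_bump isOpen_interior (hxs i)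
  -- the two functions a and b
  set afun : X → V := fun x => (φ x + ψ x) • w with hafun
  set bfun : X → V := fun x => χ x • wb with hbfun
  have hφsupp : ∀ x, φ x ≠ 0 → x ∈ OO i 0 := by
    intro x h; by_contra hx; exact h (hφ0 x hx)
  have hψsupp : ∀ x, ψ x ≠ 0 → x ∈ OO i (k + 1) := by
    intro x h; by_contra hx; exact h (hψ0 x hx)
  have hχsupp : ∀ x, χ x ≠ 0 → x ∈ interior (R i) := by
    intro x h; by_contra hx; exact h (hχ0 x hx)
  have hasupp : {x | afun x ≠ 0} ⊆ OO i 0 ∪ OO i (k + 1) := by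
    intro x hx
    by_contra hc
    rw [Set.mem_union] at hc
    push_neg at hc
    have h1 : φ x = 0 := by
      by_contra h; exact hc.1 (hφsupp x h)
    have h2 : ψ x = 0 := by
      by_contra h; exact hc.2 (hψsupp x h)
    apply hx
    show (φ x + ψ x) • w = 0
    rw [h1, h2, add_zero, zero_smul]
  have hsum01 : ∀ x, φ x + ψ x ∈ Set.Icc (0:ℝ) 1 := by
    intro x
    by_cases h1 : φ x = 0
    · rw [h1, zero_add]; exact hψ01 x
    · have h2 : ψ x = 0 := by
        by_contra h2
        exact Set.disjoint_left.mp (hOOd i 0 (k + 1) (by omega)) (hφsupp x h1) (hψsupp x h2)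
      rw [h2, add_zero]; exact hφ01 x
  have haK : afun ∈ CKset X V Q := by
    constructor
    · exact (hφc.add hψc).smul continuous_const
    · refine closure_minimal ?_ hQc.isClosed
      refine hasupp.trans ?_
      refine Set.union_subset ((hOOsub i 0).trans interior_subset)
        ((hOOsub i (k + 1)).trans interior_subset)
  have hbK : bfun ∈ CKset X V (R i) := by
    constructor
    · exact hχc.smul continuous_const
    · refine closure_minimal ?_ (hRc i).isClosed
      intro x hx
      have h1 : χ x ≠ 0 := by
        intro h; apply hx; show χ x • wb = 0; rw [h, zero_smul]
      exact interior_subset (hχsupp x h1)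
  -- both functions lie in V'
  have hAmem : Set.inclusion (CKset_subset_Ccpt X V Q hQc) ⟨afun, haK⟩ ∈ V' := by
    apply hεQ
    intro x
    rw [hsymm]
    exact hwsmall _ (hsum01 x)
  have hBmem : Set.inclusion (CKset_subset_Ccpt X V (R i) (hRc i)) ⟨bfun, hbK⟩ ∈ V' := by
    apply hεR
    intro x
    rw [hsymm]
    exact hwbsmall _ (hχ01 x)
  -- their sum lies in U, hence is not blocked
  have hsumU : (Set.inclusion (CKset_subset_Ccpt X V Q hQc) ⟨afun, haK⟩ +
      Set.inclusion (CKset_subset_Ccpt X V (R i) (hRc i)) ⟨bfun, hbK⟩) ∈ U :=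
    hhalf _ hAmem _ hBmem
  have hsumval : ((Set.inclusion (CKset_subset_Ccpt X V Q hQc) ⟨afun, haK⟩ +
      Set.inclusion (CKset_subset_Ccpt X V (R i) (hRc i)) ⟨bfun, hbK⟩ : CcptAdd X V) : X → V)
      = afun + bfun := rfl
  have hnotB := hsumU i k
  rw [hsumval] at hnotB
  -- but it is blocked: contradiction
  apply hnotB
  have hCab : ∃ C, ∀ x, d ((afun + bfun) x) 0 ≤ C := by
    have := hboundC (Set.inclusion (CKset_subset_Ccpt X V Q hQc) ⟨afun, haK⟩ +
      Set.inclusion (CKset_subset_Ccpt X V (R i) (hRc i)) ⟨bfun, hbK⟩)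
    rwa [hsumval] at this
  obtain ⟨Cab, hCab⟩ := hCab
  -- pointwise values
  have hbQ : ∀ x, x ∈ Q → bfun x = 0 := by
    intro x hx
    have h1 : χ x = 0 := by
      by_contra h
      exact hRQ i x (interior_subset (hχsupp x h)) hx
    show χ x • wb = 0
    rw [h1, zero_smul]
  have haR : ∀ x, x ∈ R i → afun x = 0 := by
    intro x hx
    have h1 : φ x = 0 := by
      by_contra h
      exact hRQ i x hx (interior_subset (hOOsub i 0 (hφsupp x h)))
    have h2 : ψ x = 0 := by
      by_contra h
      exact hRQ i x hx (interior_subset (hOOsub i (k + 1) (hψsupp x h)))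
    show (φ x + ψ x) • w = 0
    rw [h1, h2, add_zero, zero_smul]
  refine ⟨?_, ?_, ?_, ?_⟩
  · -- main pocket is loud
    have hval : (afun + bfun) y₀ = w := by
      have h1 : ψ y₀ = 0 := by
        by_contra h
        exact Set.disjoint_left.mp (hOOd i 0 (k + 1) (by omega)) hy₀ (hψsupp y₀ h)
      have h2 : bfun y₀ = 0 := hbQ y₀ (interior_subset (hOOsub i 0 hy₀))
      show (φ y₀ + ψ y₀) • w + bfun y₀ = w
      rw [h1, h2, hφ1, add_zero, add_zero, one_smul]
    have h3 := le_dsup (d := d) (S := OO i 0) hCab hy₀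
    rw [hval] at h3
    have h4 : (0:ℝ) < (2:ℝ)⁻¹ ^ i := pow_pos (by norm_num) i
    linarith
  · -- sub-pocket k is loud
    have hval : (afun + bfun) y₁ = w := by
      have h1 : φ y₁ = 0 := by
        by_contra h
        exact Set.disjoint_left.mp (hOOd i 0 (k + 1) (by omega)) (hφsupp y₁ h) hy₁
      have h2 : bfun y₁ = 0 := hbQ y₁ (interior_subset (hOOsub i (k + 1) hy₁))
      show (φ y₁ + ψ y₁) • w + bfun y₁ = w
      rw [h1, h2, hψ1, zero_add, add_zero, one_smul]
    have h3 := le_dsup (d := d) (S := OO i (k + 1)) hCab hy₁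
    rw [hval] at h3
    have h4 : (0:ℝ) < (2:ℝ)⁻¹ ^ i := pow_pos (by norm_num) i
    linarith
  · -- the other sub-pockets are silent
    refine dsup_vanish_le hrefl (by positivity) ?_
    intro x hx
    rw [Set.mem_iUnion₂] at hx
    obtain ⟨m, hm, hxm⟩ := hx
    have h1 : φ x = 0 := by
      by_contra h
      exact Set.disjoint_left.mp (hOOd i 0 (m + 1) (by omega)) (hφsupp x h) hxm
    have h2 : ψ x = 0 := by
      by_contra h
      refine Set.disjoint_left.mp (hOOd i (k + 1) (m + 1) ?_) (hψsupp x h) hxm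
      simp only [Set.mem_setOf_eq] at hm
      omega
    have h3 : bfun x = 0 := hbQ x (interior_subset (hOOsub i (m + 1) hxm))
    show (φ x + ψ x) • w + bfun x = 0
    rw [h1, h2, h3]
    simp
  · -- the far set R i is active
    have hval : (afun + bfun) (xs i) = wb := by
      have h1 : afun (xs i) = 0 := haR _ (interior_subset (hxs i))
      show afun (xs i) + χ (xs i) • wb = wb
      rw [h1, hχ1, zero_add, one_smul]
    have h3 := le_dsup (d := d) (S := R i) hCab (interior_subset (hxs i))
    rw [hval] at h3
    linarith
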